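/- Let d ≥ 1 be an integer, p > 1 a real number, and let U : ℝ^d → ℝ be a positive, radially symmetric Schwartz function satisfying ΔU + U^p − U = 0 pointwise on ℝ^d, with ∇U not identically zero. Then for every j ∈ {1, …, d}, ∫_{ℝ^d} U² dx = [ (p(2−d) + 2 + d)/(p−1) ] ∫_{ℝ^d} (∂U/∂x_j)² dx. -/

import Mathlib

open MeasureTheory Real Filter Topology Asymptotics

section IBP
variable {V : Type*} [NormedAddCommGroup V] [InnerProductSpace ℝ V] [FiniteDimensional ℝ V]
  [MeasurableSpace V] [BorelSpace V]

/-- Whole-space integration by parts: the integral of a directional derivative vanishes. -/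
lemma ibp0 (f : V → ℝ) (h1 : Integrable f) (h2 : Differentiable ℝ f)
    (h3 : Integrable (fderiv ℝ f)) (v : V) : ∫ x, fderiv ℝ f x v = 0 := by
  set F : V → ℂ := fun x => (f x : ℂ) with hF
  have hdF : ∀ x, HasFDerivAt F (Complex.ofRealCLM.comp (fderiv ℝ f x)) x := fun x =>
    Complex.ofRealCLM.hasFDerivAt.comp x (h2 x).hasFDerivAt
  have hFderiv : fderiv ℝ F = fun x => Complex.ofRealCLM.comp (fderiv ℝ f x) :=
    funext fun x => (hdF x).fderiv
  have hFdiff : Differentiable ℝ F := fun x => (hdF x).differentiableAt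
  have hFint : Integrable F := h1.ofReal
  have hF'int : Integrable (fderiv ℝ F) := by
    rw [hFderiv]
    exact ((ContinuousLinearMap.compL ℝ V ℝ ℂ) Complex.ofRealCLM).integrable_comp h3
  have key := Real.fourier_fderiv hFint hFdiff hF'int
  have h0 : FourierTransform.fourier (fderiv ℝ F) 0 = ∫ x, fderiv ℝ F x := by
    rw [Real.fourier_eq]
    simp
  have h0' : FourierTransform.fourier (fderiv ℝ F) 0 = 0 := by
    rw [key]
    ext w
    simp [VectorFourier.fourierSMulRight_apply]
  have hInt0 : (∫ x, fderiv ℝ F x) = 0 := by rw [← h0, h0']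
  have : (∫ x, fderiv ℝ F x v) = 0 := by
    rw [← ContinuousLinearMap.integral_apply hF'int v, hInt0]; simp
  rw [hFderiv] at this
  simp only [ContinuousLinearMap.comp_apply] at this
  have hint : Integrable (fun x => fderiv ℝ f x v) := h3.apply_continuousLinearMap v
  have h4 : ∫ x, Complex.ofRealCLM ((fderiv ℝ f x) v) = Complex.ofRealCLM (∫ x, fderiv ℝ f x v) :=
    ContinuousLinearMap.integral_comp_comm _ hint
  rw [h4] at this
  simpa using this
end IBP

section Euclid
variable {d : ℕ}

local notation "Ed" => EuclideanSpace ℝ (Fin d)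

lemma coord_le (x : Ed) (j : Fin d) : |x j| ≤ ‖x‖ := by
  have h := abs_real_inner_le_norm (EuclideanSpace.single j 1) x
  simpa [EuclideanSpace.inner_single_left, EuclideanSpace.norm_single] using h

/-- Package of integrability/differentiability conditions for whole-space IBP. -/
structure Nice (F : Ed → ℝ) : Prop where
  diff : Differentiable ℝ F
  int : Integrable F
  int' : Integrable (fderiv ℝ F)
  xint : Integrable (fun x => ‖x‖ * ‖F x‖)
  xint' : Integrable (fun x => ‖x‖ * ‖fderiv ℝ F x‖)

/-- Integration by parts against the coordinate function `x j`. -/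
lemma ibp1 {F : Ed → ℝ} (hF : Nice F) (j : Fin d) (v : Ed) :
    ∫ x, x j * fderiv ℝ F x v = -(v j) * ∫ x, F x := by
  set c : Ed →L[ℝ] ℝ := EuclideanSpace.proj j with hc
  have hcnorm : ‖c‖ ≤ 1 := by
    apply ContinuousLinearMap.opNorm_le_bound _ zero_le_one
    intro x
    rw [one_mul]
    exact coord_le x j
  set G : Ed → ℝ := fun x => x j * F x with hG
  have hdG : ∀ x, HasFDerivAt G (x j • fderiv ℝ F x + F x • c) x := by
    intro x
    exact (c.hasFDerivAt (x := x)).mul (hF.diff x).hasFDerivAt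
  have hGderiv : fderiv ℝ G = fun x => x j • fderiv ℝ F x + F x • c :=
    funext fun x => (hdG x).fderiv
  have hGdiff : Differentiable ℝ G := fun x => (hdG x).differentiableAt
  have hGint : Integrable G := by
    apply hF.xint.mono' (c.continuous.aestronglyMeasurable.mul hF.int.aestronglyMeasurable)
    filter_upwards with x
    simp only [Pi.mul_apply, norm_mul]
    gcongr
    exact coord_le x j
  have hG'int : Integrable (fderiv ℝ G) := by
    rw [hGderiv]
    have hdom : Integrable (fun x => ‖x‖ * ‖fderiv ℝ F x‖ + ‖F x‖ * 1) := by
      refine (hF.xint'.add hF.int.norm).congr (Eventually.of_forall fun x => ?_)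
      simp
    apply hdom.mono' (((c.continuous.aestronglyMeasurable).smul
      hF.int'.aestronglyMeasurable).add (hF.int.aestronglyMeasurable.smul_const c))
    filter_upwards with x
    refine (norm_add_le _ _).trans ?_
    gcongr
    · rw [show (⇑c • fderiv ℝ F) x = c x • fderiv ℝ F x from rfl, norm_smul]; gcongr; exact coord_le x j
    · rw [norm_smul, Real.norm_eq_abs]
      calc |F x| * ‖c‖ ≤ |F x| * 1 := by gcongr
        _ = ‖F x‖ * 1 := rfl
  have h0 := ibp0 G hGint hGdiff hG'int v
  have hsplit : ∀ x, fderiv ℝ G x v = x j * fderiv ℝ F x v + (v j) * F x := by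
    intro x
    rw [hGderiv]
    simp only [ContinuousLinearMap.add_apply, ContinuousLinearMap.smul_apply, smul_eq_mul]
    have : c v = v j := rfl
    rw [this]; ring
  rw [integral_congr_ae (Eventually.of_forall hsplit)] at h0
  have hint1 : Integrable (fun x => x j * fderiv ℝ F x v) := by
    apply (hF.xint'.mul_const ‖v‖).mono'
      (c.continuous.aestronglyMeasurable.mul (hF.int'.apply_continuousLinearMap v).aestronglyMeasurable)
    filter_upwards with x
    simp only [Pi.mul_apply, norm_mul]
    calc ‖x j‖ * ‖fderiv ℝ F x v‖ ≤ ‖x‖ * (‖fderiv ℝ F x‖ * ‖v‖) := by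
          apply mul_le_mul (coord_le x j) ((fderiv ℝ F x).le_opNorm v) (norm_nonneg _) (norm_nonneg _)
      _ = ‖x‖ * ‖fderiv ℝ F x‖ * ‖v‖ := by ring
  have hint2 : Integrable (fun x => (v j) * F x) := hF.int.const_mul _
  rw [integral_add hint1 hint2, integral_const_mul] at h0
  linarith [h0]
end Euclid

section Schwartz
variable {d : ℕ}
local notation "Ed" => EuclideanSpace ℝ (Fin d)

lemma sbound {W : Type*} [NormedAddCommGroup W] [NormedSpace ℝ W]
    (f : SchwartzMap Ed W) : ∃ C, 0 ≤ C ∧ ∀ x, ‖f x‖ ≤ C := by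
  obtain ⟨C, hC, h⟩ := f.decay 0 0
  exact ⟨C, hC.le, fun x => by simpa [norm_iteratedFDeriv_zero] using h x⟩

lemma sxint {W : Type*} [NormedAddCommGroup W] [NormedSpace ℝ W]
    (f : SchwartzMap Ed W) : Integrable (fun x => ‖x‖ * ‖f x‖) := by
  simpa using f.integrable_pow_mul volume 1

lemma sfd_eq (f : SchwartzMap Ed ℝ) : ⇑(SchwartzMap.fderivCLM ℝ _ _ f) = fderiv ℝ ⇑f :=
  funext (SchwartzMap.fderivCLM_apply ℝ f)

lemma sfd_int (f : SchwartzMap Ed ℝ) : Integrable (fderiv ℝ ⇑f) := by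
  rw [← sfd_eq]; exact (SchwartzMap.fderivCLM ℝ _ _ f).integrable

lemma sfd_xint (f : SchwartzMap Ed ℝ) : Integrable (fun x => ‖x‖ * ‖fderiv ℝ ⇑f x‖) := by
  rw [← sfd_eq]; exact sxint _

lemma sfd_cont (f : SchwartzMap Ed ℝ) : Continuous (fderiv ℝ ⇑f) := by
  rw [← sfd_eq]; exact (SchwartzMap.fderivCLM ℝ _ _ f).continuous

lemma smul_int (f g : SchwartzMap Ed ℝ) : Integrable (fun x => f x * g x) := by
  obtain ⟨C, _, hC⟩ := sbound f
  exact g.integrable.bdd_mul f.continuous.aestronglyMeasurable (Eventually.of_forall hC)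

lemma nice_mul (f g : SchwartzMap Ed ℝ) : Nice (fun x => f x * g x) := by
  obtain ⟨Cf, hCf0, hCf⟩ := sbound f
  obtain ⟨Cg, hCg0, hCg⟩ := sbound g
  have hder : fderiv ℝ (fun y => f y * g y)
      = fun x => f x • fderiv ℝ (⇑g) x + g x • fderiv ℝ (⇑f) x :=
    funext fun x => fderiv_fun_mul f.differentiableAt g.differentiableAt
  have hcont : Continuous (fun x => f x • fderiv ℝ (⇑g) x + g x • fderiv ℝ (⇑f) x) :=
    (f.continuous.smul (sfd_cont g)).add (g.continuous.smul (sfd_cont f))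
  have hbnd : ∀ x, ‖f x • fderiv ℝ (⇑g) x + g x • fderiv ℝ (⇑f) x‖
      ≤ Cf * ‖fderiv ℝ (⇑g) x‖ + Cg * ‖fderiv ℝ (⇑f) x‖ := by
    intro x
    refine (norm_add_le _ _).trans ?_
    rw [norm_smul, norm_smul]
    gcongr
    · exact hCf x
    · exact hCg x
  refine ⟨fun x => (f.differentiableAt).mul g.differentiableAt, smul_int f g, ?_, ?_, ?_⟩
  · rw [hder]
    refine (((sfd_int g).norm.const_mul Cf).add ((sfd_int f).norm.const_mul Cg)).mono'
      hcont.aestronglyMeasurable ?_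
    filter_upwards with x
    exact hbnd x
  · refine ((sxint g).const_mul Cf).mono'
      (continuous_norm.mul (f.continuous.mul g.continuous).norm).aestronglyMeasurable ?_
    filter_upwards with x
    have h1 : ‖f x * g x‖ ≤ Cf * ‖g x‖ := by
      rw [norm_mul]
      exact mul_le_mul_of_nonneg_right (hCf x) (norm_nonneg _)
    calc ‖‖x‖ * ‖f x * g x‖‖ = ‖x‖ * ‖f x * g x‖ := by
          rw [Real.norm_eq_abs, abs_of_nonneg (by positivity)]
      _ ≤ ‖x‖ * (Cf * ‖g x‖) := by gcongr
      _ = Cf * (‖x‖ * ‖g x‖) := by ring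
  · rw [hder]
    refine (((sfd_xint g).const_mul Cf).add ((sfd_xint f).const_mul Cg)).mono'
      (continuous_norm.mul hcont.norm).aestronglyMeasurable ?_
    filter_upwards with x
    calc ‖‖x‖ * ‖f x • fderiv ℝ (⇑g) x + g x • fderiv ℝ (⇑f) x‖‖
        = ‖x‖ * ‖f x • fderiv ℝ (⇑g) x + g x • fderiv ℝ (⇑f) x‖ := by
          rw [Real.norm_eq_abs, abs_of_nonneg (by positivity)]
      _ ≤ ‖x‖ * (Cf * ‖fderiv ℝ (⇑g) x‖ + Cg * ‖fderiv ℝ (⇑f) x‖) := by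
          gcongr
          exact hbnd x
      _ = Cf * (‖x‖ * ‖fderiv ℝ (⇑g) x‖) + Cg * (‖x‖ * ‖fderiv ℝ (⇑f) x‖) := by ring

end Schwartz

section SIBP
variable {d : ℕ}
local notation "Ed" => EuclideanSpace ℝ (Fin d)

lemma sxmul_int (f g : SchwartzMap Ed ℝ) (j : Fin d) :
    Integrable (fun x => x j * (f x * g x)) := by
  obtain ⟨Cf, hCf0, hCf⟩ := sbound f
  have hcont : Continuous (fun x : Ed => x j * (f x * g x)) :=
    ((EuclideanSpace.proj (𝕜 := ℝ) j).continuous).mul (f.continuous.mul g.continuous)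
  refine ((sxint g).const_mul Cf).mono' hcont.aestronglyMeasurable ?_
  filter_upwards with x
  calc ‖x j * (f x * g x)‖ = |x j| * (‖f x‖ * ‖g x‖) := by
        rw [norm_mul, norm_mul]; rfl
    _ ≤ ‖x‖ * (Cf * ‖g x‖) := by
        gcongr
        · exact coord_le x j
        · exact hCf x
    _ = Cf * (‖x‖ * ‖g x‖) := by ring

lemma sibp_dir (f g : SchwartzMap Ed ℝ) (v : Ed) :
    ∫ x, fderiv ℝ (⇑f) x v * g x = - ∫ x, f x * fderiv ℝ (⇑g) x v := by
  have h0 := ibp0 (fun x => f x * g x) (smul_int f g)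
    (fun x => f.differentiableAt.mul g.differentiableAt) (nice_mul f g).int' v
  have hsplit : ∀ x, fderiv ℝ (fun y => f y * g y) x v
      = fderiv ℝ (⇑f) x v * g x + f x * fderiv ℝ (⇑g) x v := by
    intro x
    rw [fderiv_fun_mul f.differentiableAt g.differentiableAt]
    simp only [ContinuousLinearMap.add_apply, ContinuousLinearMap.smul_apply, smul_eq_mul]
    ring
  have i1 : Integrable (fun x => fderiv ℝ (⇑f) x v * g x) := by
    have := smul_int (LineDeriv.lineDerivOp v f) g
    simpa only [SchwartzMap.lineDerivOp_apply_eq_fderiv] using this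
  have i2 : Integrable (fun x => f x * fderiv ℝ (⇑g) x v) := by
    have := smul_int f (LineDeriv.lineDerivOp v g)
    simpa only [SchwartzMap.lineDerivOp_apply_eq_fderiv] using this
  rw [integral_congr_ae (Eventually.of_forall hsplit), integral_add i1 i2] at h0
  linarith

lemma sibp_coord (f g : SchwartzMap Ed ℝ) (j : Fin d) (v : Ed) :
    (∫ x, x j * (fderiv ℝ (⇑f) x v * g x)) + (∫ x, x j * (f x * fderiv ℝ (⇑g) x v))
      = -(v j) * ∫ x, f x * g x := by
  have h0 := ibp1 (nice_mul f g) j v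
  have hsplit : ∀ x, x j * fderiv ℝ (fun y => f y * g y) x v
      = x j * (fderiv ℝ (⇑f) x v * g x) + x j * (f x * fderiv ℝ (⇑g) x v) := by
    intro x
    rw [fderiv_fun_mul f.differentiableAt g.differentiableAt]
    simp only [ContinuousLinearMap.add_apply, ContinuousLinearMap.smul_apply, smul_eq_mul]
    ring
  have i1 : Integrable (fun x => x j * (fderiv ℝ (⇑f) x v * g x)) := by
    have := sxmul_int (LineDeriv.lineDerivOp v f) g j
    simpa only [SchwartzMap.lineDerivOp_apply_eq_fderiv] using this
  have i2 : Integrable (fun x => x j * (f x * fderiv ℝ (⇑g) x v)) := by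
    have := sxmul_int f (LineDeriv.lineDerivOp v g) j
    simpa only [SchwartzMap.lineDerivOp_apply_eq_fderiv] using this
  rw [integral_congr_ae (Eventually.of_forall hsplit), integral_add i1 i2] at h0
  linarith

lemma smass (f : SchwartzMap Ed ℝ) :
    2 * ∑ j, ∫ x, x j * (f x * fderiv ℝ (⇑f) x (EuclideanSpace.single j 1))
      = -(d : ℝ) * ∫ x, f x * f x := by
  have key : ∀ j : Fin d,
      2 * ∫ x, x j * (f x * fderiv ℝ (⇑f) x (EuclideanSpace.single j 1))
        = - ∫ x, f x * f x := by
    intro j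
    have h := sibp_coord f f j (EuclideanSpace.single j 1)
    have hjj : (EuclideanSpace.single j (1:ℝ)) j = 1 := by
      simp [EuclideanSpace.single_apply]
    have hcomm : (∫ x, x j * (fderiv ℝ (⇑f) x (EuclideanSpace.single j 1) * f x))
        = ∫ x, x j * (f x * fderiv ℝ (⇑f) x (EuclideanSpace.single j 1)) := by
      congr 1; ext x; ring
    rw [hcomm, hjj] at h
    linarith
  rw [Finset.mul_sum]
  rw [Finset.sum_congr rfl (fun j _ => key j)]
  simp only [Finset.sum_const, Finset.card_univ, Fintype.card_fin, nsmul_eq_mul]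
  ring

end SIBP

section RadSym
variable {d : ℕ}
local notation "Ed" => EuclideanSpace ℝ (Fin d)

lemma schwartz_symm (U : SchwartzMap Ed ℝ) (x m n : Ed) :
    fderiv ℝ (fun y => fderiv ℝ (⇑U) y m) x n = fderiv ℝ (fun y => fderiv ℝ (⇑U) y n) x m := by
  have hd1 : ∀ y, HasFDerivAt (⇑U) (fderiv ℝ (⇑U) y) y := fun y =>
    U.differentiableAt.hasFDerivAt
  have hd2 : Differentiable ℝ (fderiv ℝ (⇑U)) := by
    rw [← sfd_eq]; exact (SchwartzMap.fderivCLM ℝ _ _ U).differentiable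
  have hsym := second_derivative_symmetric hd1 (hd2 x).hasFDerivAt n m
  have key : ∀ m n : Ed, fderiv ℝ (fun y => fderiv ℝ (⇑U) y m) x n
      = (fderiv ℝ (fderiv ℝ (⇑U)) x n) m := by
    intro m n
    have hc : (fun y => fderiv ℝ (⇑U) y m)
        = (ContinuousLinearMap.apply ℝ ℝ m) ∘ (fderiv ℝ (⇑U)) := rfl
    rw [hc, fderiv_comp x (ContinuousLinearMap.apply ℝ ℝ m).differentiableAt (hd2 x),
      ContinuousLinearMap.fderiv]
    simp
  rw [key m n, key n m]
  exact hsym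

lemma radial_partials_eq (U : SchwartzMap Ed ℝ) (φ : ℝ → ℝ) (hrad : ∀ x, U x = φ ‖x‖)
    (j k : Fin d) :
    ∫ x, (fderiv ℝ (⇑U) x (EuclideanSpace.single j 1)) ^ 2
      = ∫ x, (fderiv ℝ (⇑U) x (EuclideanSpace.single k 1)) ^ 2 := by
  set T := LinearIsometryEquiv.piLpCongrLeft 2 ℝ ℝ (Equiv.swap j k) with hT
  have hUT : (fun x => U (T x)) = ⇑U := by
    funext x
    rw [hrad, hrad, T.norm_map]
  have hTapp : ∀ (v : Ed) (i : Fin d), T v i = v (Equiv.swap j k i) := by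
    intro v i
    have : T v i = v ((Equiv.swap j k).symm i) := rfl
    rw [this, Equiv.symm_swap]
  have hTsingle : T (EuclideanSpace.single j 1) = EuclideanSpace.single k 1 := by
    ext i
    rw [hTapp]
    have hiff : (Equiv.swap j k) i = j ↔ i = k := by
      rw [Equiv.swap_apply_eq_iff, Equiv.swap_apply_left]
    rw [EuclideanSpace.single_apply, EuclideanSpace.single_apply, if_congr hiff rfl rfl]
  have hchain : ∀ x : Ed, fderiv ℝ (⇑U) x (EuclideanSpace.single j 1)
      = fderiv ℝ (⇑U) (T x) (EuclideanSpace.single k 1) := by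
    intro x
    have hT' : HasFDerivAt (⇑T)
        ((T.toContinuousLinearEquiv : Ed →L[ℝ] Ed)) x :=
      T.toContinuousLinearEquiv.hasFDerivAt
    have h1 : HasFDerivAt (fun y => U (T y))
        ((fderiv ℝ (⇑U) (T x)).comp (T.toContinuousLinearEquiv : Ed →L[ℝ] Ed)) x :=
      (U.differentiableAt (x := T x)).hasFDerivAt.comp x hT'
    rw [hUT] at h1
    rw [h1.fderiv]
    simp only [ContinuousLinearMap.comp_apply]
    rw [show (T.toContinuousLinearEquiv : Ed →L[ℝ] Ed) (EuclideanSpace.single j 1)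
      = T (EuclideanSpace.single j 1) from rfl, hTsingle]
  calc ∫ x, (fderiv ℝ (⇑U) x (EuclideanSpace.single j 1)) ^ 2
      = ∫ x, (fderiv ℝ (⇑U) (T x) (EuclideanSpace.single k 1)) ^ 2 := by
        congr 1; funext x; rw [hchain]
    _ = ∫ y, (fderiv ℝ (⇑U) y (EuclideanSpace.single k 1)) ^ 2 :=
        T.measurePreserving.integral_comp T.toHomeomorph.measurableEmbedding
          (fun y => (fderiv ℝ (⇑U) y (EuclideanSpace.single k 1)) ^ 2)

end RadSym

section Rpow
variable {d : ℕ}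
local notation "Ed" => EuclideanSpace ℝ (Fin d)

lemma rpow_hasFDerivAt (U : SchwartzMap Ed ℝ) (hUpos : ∀ x, 0 < U x) (q : ℝ) (x : Ed) :
    HasFDerivAt (fun y => U y ^ q) ((q * U x ^ (q - 1)) • fderiv ℝ (⇑U) x) x :=
  (Real.hasDerivAt_rpow_const (Or.inl (hUpos x).ne')).comp_hasFDerivAt x
    U.differentiableAt.hasFDerivAt

lemma nice_rpow (U : SchwartzMap Ed ℝ) (hUpos : ∀ x, 0 < U x) (q : ℝ) (hq : 1 ≤ q) :
    Nice (fun x => U x ^ q) := by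
  obtain ⟨M, hM0, hM⟩ := sbound U
  have hUM : ∀ x, U x ≤ M := fun x => (le_abs_self _).trans (hM x)
  have hq0 : 0 ≤ q - 1 := by linarith
  have hpow_le : ∀ x, U x ^ (q - 1) ≤ M ^ (q - 1) := fun x =>
    Real.rpow_le_rpow (hUpos x).le (hUM x) hq0
  have hpow_pos : ∀ x, 0 < U x ^ (q - 1) := fun x => Real.rpow_pos_of_pos (hUpos x) _
  have hsplit : ∀ x, U x ^ q = U x ^ (q - 1) * U x := by
    intro x
    have h := Real.rpow_add (hUpos x) (q - 1) 1
    rw [Real.rpow_one] at h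
    simpa using h
  have hcont_pow : Continuous (fun x : Ed => U x ^ (q - 1)) := by
    apply continuous_iff_continuousAt.mpr
    intro x
    exact (Real.continuousAt_rpow_const _ _ (Or.inl (hUpos x).ne')).comp
      U.continuous.continuousAt
  have hder : fderiv ℝ (fun y => U y ^ q)
      = fun x => (q * U x ^ (q - 1)) • fderiv ℝ (⇑U) x :=
    funext fun x => (rpow_hasFDerivAt U hUpos q x).fderiv
  have hdiff : Differentiable ℝ (fun y => U y ^ q) := fun x =>
    (rpow_hasFDerivAt U hUpos q x).differentiableAt
  have hRbound : ∀ x, ‖U x ^ q‖ ≤ M ^ (q - 1) * ‖U x‖ := by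
    intro x
    rw [hsplit x, norm_mul]
    gcongr
    rw [Real.norm_eq_abs, abs_of_pos (hpow_pos x)]
    exact hpow_le x
  have hR'bound : ∀ x, ‖(q * U x ^ (q - 1)) • fderiv ℝ (⇑U) x‖
      ≤ q * M ^ (q - 1) * ‖fderiv ℝ (⇑U) x‖ := by
    intro x
    rw [norm_smul]
    gcongr
    have hqpos : (0:ℝ) < q := by linarith
    rw [Real.norm_eq_abs, abs_of_pos (mul_pos hqpos (hpow_pos x))]
    have := hpow_le x
    nlinarith [hpow_pos x]
  have hcontR' : Continuous (fun x => (q * U x ^ (q - 1)) • fderiv ℝ (⇑U) x) :=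
    ((continuous_const.mul hcont_pow).smul (sfd_cont U))
  refine ⟨hdiff, ?_, ?_, ?_, ?_⟩
  · refine (U.integrable.norm.const_mul (M ^ (q - 1))).mono'
      hdiff.continuous.aestronglyMeasurable ?_
    filter_upwards with x using hRbound x
  · rw [hder]
    refine ((sfd_int U).norm.const_mul (q * M ^ (q - 1))).mono'
      hcontR'.aestronglyMeasurable ?_
    filter_upwards with x using hR'bound x
  · refine ((sxint U).const_mul (M ^ (q - 1))).mono'
      (continuous_norm.mul hdiff.continuous.norm).aestronglyMeasurable ?_
    filter_upwards with x
    calc ‖‖x‖ * ‖U x ^ q‖‖ = ‖x‖ * ‖U x ^ q‖ := by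
          rw [Real.norm_eq_abs, abs_of_nonneg (by positivity)]
      _ ≤ ‖x‖ * (M ^ (q - 1) * ‖U x‖) := by gcongr; exact hRbound x
      _ = M ^ (q - 1) * (‖x‖ * ‖U x‖) := by ring
  · rw [hder]
    refine ((sfd_xint U).const_mul (q * M ^ (q - 1))).mono'
      (continuous_norm.mul hcontR'.norm).aestronglyMeasurable ?_
    filter_upwards with x
    calc ‖‖x‖ * ‖(q * U x ^ (q - 1)) • fderiv ℝ (⇑U) x‖‖
        = ‖x‖ * ‖(q * U x ^ (q - 1)) • fderiv ℝ (⇑U) x‖ := by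
          rw [Real.norm_eq_abs, abs_of_nonneg (by positivity)]
      _ ≤ ‖x‖ * (q * M ^ (q - 1) * ‖fderiv ℝ (⇑U) x‖) := by gcongr; exact hR'bound x
      _ = q * M ^ (q - 1) * (‖x‖ * ‖fderiv ℝ (⇑U) x‖) := by ring

end Rpow

/-- Partial derivative of `f` in the `j`-th coordinate direction. -/
noncomputable def pd {d : ℕ} {E : Type*} [NormedAddCommGroup E] [NormedSpace ℝ E]
    (f : EuclideanSpace ℝ (Fin d) → E) (j : Fin d) (x : EuclideanSpace ℝ (Fin d)) : E :=
  fderiv ℝ f x (EuclideanSpace.single j 1)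

/-- Euclidean Laplacian: sum of second partial derivatives. -/
noncomputable def lap {d : ℕ} {E : Type*} [NormedAddCommGroup E] [NormedSpace ℝ E]
    (f : EuclideanSpace ℝ (Fin d) → E) (x : EuclideanSpace ℝ (Fin d)) : E :=
  ∑ j, pd (pd f j) j x

/-- the ratio identity `∫U² = δ ∫(∂U/∂x_j)²` with
`δ = (p(2−d)+2+d)/(p−1)`, for a positive radial Schwartz ground state. -/
theorem eigenvalue_ratio_identity (d : ℕ) (hd : 1 ≤ d) (p : ℝ) (hp : 1 < p)
    (U : SchwartzMap (EuclideanSpace ℝ (Fin d)) ℝ)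
    (φ : ℝ → ℝ) (hrad : ∀ x, U x = φ ‖x‖)
    (hUpos : ∀ x, 0 < U x)
    (hUeq : ∀ x, lap (⇑U) x + U x ^ p - U x = 0)
    (hgrad : ∃ (x : EuclideanSpace ℝ (Fin d)) (j : Fin d), pd (⇑U) j x ≠ 0) :
    ∀ j : Fin d,
      ∫ x, (U x) ^ 2
        = ((p * (2 - (d : ℝ)) + 2 + (d : ℝ)) / (p - 1)) * ∫ x, (pd (⇑U) j x) ^ 2 := by
  intro j
  classical
  set e : Fin d → EuclideanSpace ℝ (Fin d) := fun k => EuclideanSpace.single k (1:ℝ) with he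
  set V : Fin d → SchwartzMap (EuclideanSpace ℝ (Fin d)) ℝ :=
    fun k => LineDeriv.lineDerivOp (e k) U with hVdef
  have hVapp : ∀ (k : Fin d) x, V k x = fderiv ℝ (⇑U) x (e k) := fun k x =>
    SchwartzMap.lineDerivOp_apply_eq_fderiv (e k) U x
  have hVfun : ∀ k, ⇑(V k) = fun y => fderiv ℝ (⇑U) y (e k) := fun k => funext (hVapp k)
  have hpd : ∀ k, pd (⇑U) k = ⇑(V k) := fun k => funext fun y => (hVapp k y).symm
  set a : Fin d → ℝ := fun k => ∫ x, V k x * V k x with ha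
  set A : ℝ := ∑ k, a k with hA
  set Bv : ℝ := ∫ x, U x * U x with hBv
  set Cv : ℝ := ∫ x, U x ^ (p + 1) with hCv
  -- rpow facts
  have hnR : Nice (fun x => U x ^ (p+1)) := nice_rpow U hUpos (p+1) (by linarith)
  have hRder : ∀ x, HasFDerivAt (fun y => U y ^ (p+1))
      (((p+1) * U x ^ p) • fderiv ℝ (⇑U) x) x := by
    intro x
    have := rpow_hasFDerivAt U hUpos (p+1) x
    simpa using this
  have hRfder : fderiv ℝ (fun y => U y ^ (p+1))
      = fun x => ((p+1) * U x ^ p) • fderiv ℝ (⇑U) x := funext fun x => (hRder x).fderiv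
  -- laplacian facts
  have hlap : ∀ x, lap (⇑U) x = U x - U x ^ p := fun x => by linarith [hUeq x]
  have hlap2 : ∀ x, lap (⇑U) x = ∑ k, fderiv ℝ (⇑(V k)) x (e k) := by
    intro x
    unfold lap
    refine Finset.sum_congr rfl fun k _ => ?_
    show fderiv ℝ (pd (⇑U) k) x (e k) = _
    rw [hpd k]
  -- Energy identity: A = Cv - Bv
  have hintUVk' : ∀ k, Integrable (fun x => U x * fderiv ℝ (⇑(V k)) x (e k)) := by
    intro k
    have := smul_int U (LineDeriv.lineDerivOp (e k) (V k))
    simpa only [SchwartzMap.lineDerivOp_apply_eq_fderiv] using this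
  have hF1k : ∀ k, a k = - ∫ x, U x * fderiv ℝ (⇑(V k)) x (e k) := by
    intro k
    have h := sibp_dir U (V k) (e k)
    have h2 : (∫ x, fderiv ℝ (⇑U) x (e k) * V k x) = a k := by
      congr 1
    rw [h2] at h
    exact h
  have hE1 : A = Cv - Bv := by
    have hswap : (∫ x, U x * lap (⇑U) x) = ∑ k, ∫ x, U x * fderiv ℝ (⇑(V k)) x (e k) := by
      rw [← integral_finset_sum _ (fun k _ => hintUVk' k)]
      congr 1; funext x
      rw [hlap2 x, Finset.mul_sum]
    have hsum1 : A = - ∫ x, U x * lap (⇑U) x := by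
      calc A = ∑ k, -(∫ x, U x * fderiv ℝ (⇑(V k)) x (e k)) :=
            Finset.sum_congr rfl fun k _ => hF1k k
        _ = -∑ k, ∫ x, U x * fderiv ℝ (⇑(V k)) x (e k) := by
            rw [Finset.sum_neg_distrib]
        _ = - ∫ x, U x * lap (⇑U) x := by rw [hswap]
    have hval : (∫ x, U x * lap (⇑U) x) = Bv - Cv := by
      have hcong : (fun x => U x * lap (⇑U) x) = fun x => U x * U x - U x ^ (p+1) := by
        funext x
        rw [hlap x]
        have hx : U x ^ (p+1) = U x ^ p * U x := by
          have h := Real.rpow_add (hUpos x) p 1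
          rw [Real.rpow_one] at h
          exact h
        rw [hx]; ring
      rw [hcong, integral_sub (smul_int U U) hnR.int]
    rw [hsum1, hval]; ring
  -- F4 : (p+1) * ∑ ∫ x_j U^p ∂_j U = -d Cv
  have hF4 : (p+1) * ∑ j' : Fin d, ∫ x, x j' * (U x ^ p * fderiv ℝ (⇑U) x (e j'))
      = -(d:ℝ) * Cv := by
    have key : ∀ j' : Fin d,
        (p+1) * ∫ x, x j' * (U x ^ p * fderiv ℝ (⇑U) x (e j')) = - Cv := by
      intro j'
      have h := ibp1 hnR j' (e j')
      have hpt : ∀ x : EuclideanSpace ℝ (Fin d),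
          x j' * fderiv ℝ (fun y => U y ^ (p+1)) x (e j')
            = (p+1) * (x j' * (U x ^ p * fderiv ℝ (⇑U) x (e j'))) := by
        intro x
        rw [hRfder]
        simp only [ContinuousLinearMap.coe_smul', Pi.smul_apply, smul_eq_mul]
        ring
      rw [integral_congr_ae (Eventually.of_forall hpt), integral_const_mul] at h
      have hjj : (e j') j' = 1 := by simp [he, EuclideanSpace.single_apply]
      rw [hjj] at h
      rw [h]; ring
    rw [Finset.mul_sum, Finset.sum_congr rfl fun j' _ => key j']
    simp only [Finset.sum_const, Finset.card_univ, Fintype.card_fin, nsmul_eq_mul]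
    ring
  -- cross identity / E2
  have hsymmV : ∀ (j' k : Fin d) x, fderiv ℝ (⇑(V j')) x (e k) = fderiv ℝ (⇑(V k)) x (e j') := by
    intro j' k x
    rw [hVfun j', hVfun k]
    exact schwartz_symm U x (e j') (e k)
  set T : ℝ := ∑ j' : Fin d, ∑ k : Fin d,
    ∫ x, x j' * (V j' x * fderiv ℝ (⇑(V k)) x (e k)) with hT
  have hPsum : ∀ k : Fin d,
      2 * ∑ j' : Fin d, ∫ x, x j' * (fderiv ℝ (⇑(V j')) x (e k) * V k x) = -(d:ℝ) * a k := by
    intro k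
    have h := smass (V k)
    rw [← h]
    congr 1
    refine Finset.sum_congr rfl fun j' _ => ?_
    congr 1; funext x
    rw [hsymmV j' k x]; ring
  have hRHS : ∑ j' : Fin d, ∑ k : Fin d, (-((e k) j') * ∫ x, V j' x * V k x) = -A := by
    have inner : ∀ j' : Fin d,
        ∑ k : Fin d, (-((e k) j') * ∫ x, V j' x * V k x) = -(a j') := by
      intro j'
      have hterm : ∀ k : Fin d, (-((e k) j') * ∫ x, V j' x * V k x)
          = if j' = k then -(∫ x, V j' x * V k x) else 0 := by
        intro k
        rw [he]
        simp only [EuclideanSpace.single_apply]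
        by_cases hjk : j' = k
        · simp [hjk]
        · simp [hjk]
      rw [Finset.sum_congr rfl fun k _ => hterm k, Finset.sum_ite_eq]
      simp
      rfl
    rw [Finset.sum_congr rfl fun j' _ => inner j', Finset.sum_neg_distrib, hA]
  have hE2 : 2*T = ((d:ℝ)-2)*A := by
    have h1 : (∑ j' : Fin d, ∑ k : Fin d,
        ((∫ x, x j' * (fderiv ℝ (⇑(V j')) x (e k) * V k x))
          + (∫ x, x j' * (V j' x * fderiv ℝ (⇑(V k)) x (e k))))) = -A := by
      rw [Finset.sum_congr rfl fun j' _ => Finset.sum_congr rfl fun k _ =>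
        sibp_coord (V j') (V k) j' (e k)]
      exact hRHS
    have h2 : (∑ j' : Fin d, ∑ k : Fin d,
        (∫ x, x j' * (fderiv ℝ (⇑(V j')) x (e k) * V k x))) + T = -A := by
      rw [hT, ← Finset.sum_add_distrib]
      rw [← h1]
      refine Finset.sum_congr rfl fun j' _ => ?_
      rw [← Finset.sum_add_distrib]
    have h3 : 2 * (∑ j' : Fin d, ∑ k : Fin d,
        (∫ x, x j' * (fderiv ℝ (⇑(V j')) x (e k) * V k x))) = -(d:ℝ)*A := by
      rw [Finset.sum_comm, Finset.mul_sum, Finset.sum_congr rfl fun k _ => hPsum k, hA,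
        Finset.mul_sum]
    linarith
  -- E3 : Pohozaev with the PDE
  obtain ⟨M, hM0, hM⟩ := sbound U
  have hUM : ∀ x, U x ≤ M := fun x => (le_abs_self _).trans (hM x)
  have hcontUp : Continuous (fun x : EuclideanSpace ℝ (Fin d) => U x ^ p) := by
    apply continuous_iff_continuousAt.mpr
    intro x
    exact (Real.continuousAt_rpow_const _ _ (Or.inl (hUpos x).ne')).comp
      U.continuous.continuousAt
  have hintxVUp : ∀ j' : Fin d, Integrable (fun x => x j' * (V j' x * U x ^ p)) := by
    intro j'
    have hcont : Continuous (fun x : EuclideanSpace ℝ (Fin d) => x j' * (V j' x * U x ^ p)) :=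
      (EuclideanSpace.proj (𝕜 := ℝ) j').continuous.mul ((V j').continuous.mul hcontUp)
    refine ((sxint (V j')).const_mul (M ^ p)).mono' hcont.aestronglyMeasurable ?_
    filter_upwards with x
    have hMp : |U x ^ p| ≤ M ^ p := by
      rw [abs_of_pos (Real.rpow_pos_of_pos (hUpos x) p)]
      exact Real.rpow_le_rpow (hUpos x).le (hUM x) (by linarith)
    calc ‖x j' * (V j' x * U x ^ p)‖ = |x j'| * (‖V j' x‖ * |U x ^ p|) := by
          rw [norm_mul, norm_mul]; rfl
      _ ≤ ‖x‖ * (‖V j' x‖ * M ^ p) :=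
          mul_le_mul (coord_le x j')
            (mul_le_mul_of_nonneg_left hMp (norm_nonneg _)) (by positivity) (norm_nonneg x)
      _ = M ^ p * (‖x‖ * ‖V j' x‖) := by ring
  have hTj : ∀ j' : Fin d, (∑ k : Fin d, ∫ x, x j' * (V j' x * fderiv ℝ (⇑(V k)) x (e k)))
      = (∫ x, x j' * (V j' x * U x)) - ∫ x, x j' * (V j' x * U x ^ p) := by
    intro j'
    have hintk : ∀ k : Fin d,
        Integrable (fun x => x j' * (V j' x * fderiv ℝ (⇑(V k)) x (e k))) := by
      intro k
      have := sxmul_int (V j') (LineDeriv.lineDerivOp (e k) (V k)) j'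
      simpa only [SchwartzMap.lineDerivOp_apply_eq_fderiv] using this
    rw [← integral_finset_sum _ (fun k _ => hintk k)]
    have hpt : ∀ x : EuclideanSpace ℝ (Fin d),
        (∑ k : Fin d, x j' * (V j' x * fderiv ℝ (⇑(V k)) x (e k)))
          = x j' * (V j' x * U x) - x j' * (V j' x * U x ^ p) := by
      intro x
      have hfac : (∑ k : Fin d, x j' * (V j' x * fderiv ℝ (⇑(V k)) x (e k)))
          = x j' * (V j' x * ∑ k : Fin d, fderiv ℝ (⇑(V k)) x (e k)) := by
        rw [Finset.mul_sum, Finset.mul_sum]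
      rw [hfac, ← hlap2 x, hlap x]; ring
    rw [integral_congr_ae (Eventually.of_forall hpt),
      integral_sub (sxmul_int (V j') U j') (hintxVUp j')]
  have hmassU : 2 * ∑ j' : Fin d, ∫ x, x j' * (V j' x * U x) = -(d:ℝ) * Bv := by
    have h := smass U
    rw [← h]
    congr 1
    refine Finset.sum_congr rfl fun j' _ => ?_
    congr 1; funext x; rw [hVapp]; ring
  have hmassR : (p+1) * ∑ j' : Fin d, ∫ x, x j' * (V j' x * U x ^ p) = -(d:ℝ) * Cv := by
    rw [← hF4]
    congr 1
    refine Finset.sum_congr rfl fun j' _ => ?_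
    congr 1; funext x; rw [hVapp]; ring
  have hE3 : 2*(p+1)*T = -(d:ℝ)*(p+1)*Bv + 2*(d:ℝ)*Cv := by
    have hTsplit : T = (∑ j' : Fin d, ∫ x, x j' * (V j' x * U x))
        - ∑ j' : Fin d, ∫ x, x j' * (V j' x * U x ^ p) := by
      rw [hT, Finset.sum_congr rfl fun j' _ => hTj j', Finset.sum_sub_distrib]
    rw [hTsplit]
    linear_combination (p+1) * hmassU - 2 * hmassR
  -- E4 : A = d * a j
  have hE4 : A = (d:ℝ) * a j := by
    have haeq : ∀ k, a k = a j := by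
      intro k
      have h1 : a k = ∫ x, (fderiv ℝ (⇑U) x (e k))^2 := by
        show (∫ x, V k x * V k x) = _
        refine integral_congr_ae (Eventually.of_forall fun x => ?_)
        simp only [hVapp]; ring
      have h2 : a j = ∫ x, (fderiv ℝ (⇑U) x (e j))^2 := by
        show (∫ x, V j x * V j x) = _
        refine integral_congr_ae (Eventually.of_forall fun x => ?_)
        simp only [hVapp]; ring
      rw [h1, h2]
      exact radial_partials_eq U φ hrad k j
    rw [hA, Finset.sum_congr rfl fun k _ => haeq k]
    simp only [Finset.sum_const, Finset.card_univ, Fintype.card_fin, nsmul_eq_mul]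
  -- final algebra
  have hd1 : (1:ℝ) ≤ (d:ℝ) := by exact_mod_cast hd
  have hd0 : (d:ℝ) ≠ 0 := by linarith
  have hp1 : p - 1 > 0 := by linarith
  have hkey : (d:ℝ) * ((p-1) * Bv) = (d:ℝ) * ((p*(2-(d:ℝ))+2+(d:ℝ)) * a j) := by
    linear_combination hE3 - (p+1)*hE2 - 2*(d:ℝ)*hE1 + (p*(2-(d:ℝ))+2+(d:ℝ))*hE4
  have hkey2 : (p-1) * Bv = (p*(2-(d:ℝ))+2+(d:ℝ)) * a j := mul_left_cancel₀ hd0 hkey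
  have hBgoal : (∫ x, (U x)^2) = Bv := by
    rw [hBv]; congr 1; funext x; ring
  have hagoal : (∫ x, (pd (⇑U) j x)^2) = a j := by
    congr 1; funext x
    rw [show pd (⇑U) j x = V j x from (hVapp j x).symm]
    ring
  rw [hBgoal, hagoal]
  field_simp
  linear_combination hkey2
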